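/- (Local convergence of alternating projections.) Let A and B be nonempty closed subsets of ℝⁿ and x* ∈ A ∩ B. Suppose B intersects A separably at x* with exponent ω ∈ [0,2) and constant γ > 0, and B is ω/2-Hölder regular with respect to A at x* with constant c < γ/2. Then there exists a neighborhood V of x* such that every sequence of alternating projections between A and B that has at least one iterate in V converges to a single point b* ∈ A ∩ B. -/

import Mathlib

open Set Metric Filter Topology RealInnerProductSpace
open scoped ENNReal

variable {E : Type*} [NormedAddCommGroup E] [InnerProductSpace ℝ E]

/-- The (possibly set-valued) metric projection onto a set `S`. -/
noncomputable def projSet (S : Set E) (x : E) : Set E :=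
  {s | s ∈ S ∧ ‖x - s‖ = Metric.infDist x S}

/-- `B` intersects `A` separably at `x` with exponent `ω` and constant `γ`. -/
def SeparablyIntersects (A B : Set E) (x : E) (ω γ : ℝ) : Prop :=
  ∃ U ∈ nhds x, ∀ b a' b' : E, b ∈ B → a' ∈ projSet A b → b' ∈ projSet B a' →
    b ∈ U → a' ∈ U → b' ∈ U →
    ⟪b - a', b' - a'⟫ ≤ (1 - γ * ‖b' - a'‖ ^ ω) * ‖b - a'‖ * ‖b' - a'‖

/-- `B` is `σ`-Hölder regular with respect to `A` at `bs` with constant `c`. -/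
def HolderRegular (A B : Set E) (bs : E) (σ c : ℝ) : Prop :=
  ∃ U ∈ nhds bs, ∀ a' ∈ A ∩ U, ∀ b' ∈ projSet B a' ∩ U, ∀ b ∈ B,
    ‖b - a'‖ ≤ (1 + c) * ‖a' - b'‖ → a' ∈ projSet A b →
    ⟪a' - b', b - b'⟫ ≤ Real.sqrt c * ‖a' - b'‖ ^ (σ + 1) * ‖b - b'‖

set_option maxHeartbeats 1000000 in
lemma amgm_rpow {t θ : ℝ} (ht : 0 ≤ t) (hθ0 : 0 ≤ θ) (hθ1 : θ ≤ 1) :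
    t ^ θ ≤ 1 - θ + θ * t := by
  have h := Real.geom_mean_le_arith_mean2_weighted hθ0 (by linarith : (0:ℝ) ≤ 1 - θ) ht
    (zero_le_one) (by ring)
  simpa [Real.one_rpow] using h.trans_eq (by ring)

lemma sqrt_add_le' {x y : ℝ} (hx : 0 ≤ x) (hy : 0 ≤ y) :
    Real.sqrt (x + y) ≤ Real.sqrt x + Real.sqrt y := by
  have h1 : x + y ≤ (Real.sqrt x + Real.sqrt y) ^ 2 := by
    have hx' := Real.sq_sqrt hx
    have hy' := Real.sq_sqrt hy
    nlinarith [Real.sqrt_nonneg x, Real.sqrt_nonneg y]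
  calc Real.sqrt (x + y) ≤ Real.sqrt ((Real.sqrt x + Real.sqrt y) ^ 2) := Real.sqrt_le_sqrt h1
    _ = _ := Real.sqrt_sq (by positivity)

lemma quad_bound (s p q : ℝ) (h : s ^ 2 ≤ 2 * p * s + q) : s ^ 2 ≤ 4 * p ^ 2 + 2 * q := by
  nlinarith [sq_nonneg (s - 2 * p)]

set_option maxHeartbeats 1000000 in
/-- Pure-arithmetic core of case 2, with all `rpow` quantities abstracted away. -/
lemma case2_core (θ γ c κ P KA KB : ℝ) (d r s R1 R2 Rθ Dθ : ℝ)
    (hθ0 : 0 < θ) (hc : 0 < c) (hκ0 : 0 < κ) (hP0 : 0 < P)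
    (hr : 0 < r) (hrd : r ≤ d) (hs0 : 0 ≤ s)
    (hR1 : 0 < R1) (hR2 : 0 < R2) (hRθ : 0 < Rθ) (hDθ : 0 < Dθ)
    (hcase : d ≤ (1 + c) * r)
    (hsq : s ^ 2 ≤ 2 * (Real.sqrt c * R1) * s + (d ^ 2 - r ^ 2))
    (hgap : κ * R2 ≤ d - r)
    (hstar : θ * P * Rθ * (d - r) ≤ (Dθ - Rθ) * ((1 + c) * r))
    (hRR1 : Rθ * R2 = R1 * r)
    (hRR2 : Rθ * Rθ * R2 = r * r * r)
    (hKA : KA = 2 * Real.sqrt c * (1 + c) / (θ * P * κ))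
    (hKB : KB = Real.sqrt (2 * (1 + c) ^ 3 / (θ ^ 2 * P ^ 2 * κ))) :
    s ≤ (KA + KB) * (Dθ - Rθ) := by
  have hc1 : (0:ℝ) < 1 + c := by linarith
  set G : ℝ := Dθ - Rθ with hGdef
  have hG0 : 0 ≤ G := by
    have h := hstar
    nlinarith [mul_pos (mul_pos (mul_pos hθ0 hP0) hRθ) (lt_of_lt_of_le (mul_pos hκ0 hR2) hgap)]
  have hsc0 : 0 ≤ Real.sqrt c := Real.sqrt_nonneg c
  -- step b : 2 √c R1 ≤ KA * G
  have hb : 2 * (Real.sqrt c * R1) ≤ KA * G := by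
    have h1 : θ * P * κ * (R1 * r) ≤ G * ((1 + c) * r) := by
      calc θ * P * κ * (R1 * r) = θ * P * (Rθ * (κ * R2)) := by rw [← hRR1]; ring
        _ ≤ θ * P * (Rθ * (d - r)) := by
            apply mul_le_mul_of_nonneg_left _ (by positivity)
            exact mul_le_mul_of_nonneg_left hgap hRθ.le
        _ = θ * P * Rθ * (d - r) := by ring
        _ ≤ G * ((1 + c) * r) := hstar
    have h2 : θ * P * κ * R1 ≤ G * (1 + c) :=
      le_of_mul_le_mul_right (by nlinarith) hr
    rw [hKA]
    rw [div_mul_eq_mul_div, le_div_iff₀ (by positivity)]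
    nlinarith
  -- step c : sqrt (2 (1+c) r (d-r)) ≤ KB * G
  have hq'0 : 0 ≤ 2 * (1 + c) * r * (d - r) := by
    have : 0 ≤ d - r := by linarith
    positivity
  have hKB2 : KB ^ 2 = 2 * (1 + c) ^ 3 / (θ ^ 2 * P ^ 2 * κ) := by
    rw [hKB]; exact Real.sq_sqrt (by positivity)
  have hKB0 : 0 ≤ KB := by rw [hKB]; exact Real.sqrt_nonneg _
  have hcc : 2 * (1 + c) * r * (d - r) ≤ (KB * G) ^ 2 := by
    have h3 : (θ * P * Rθ * (d - r)) ^ 2 ≤ (G * ((1 + c) * r)) ^ 2 := by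
      have h0 : 0 ≤ θ * P * Rθ * (d - r) := by
        have : 0 ≤ d - r := by linarith
        positivity
      nlinarith
    have h4 : θ ^ 2 * P ^ 2 * κ * (d - r) * (r * r * r) ≤ G ^ 2 * (1 + c) ^ 2 * r ^ 2 := by
      have h5 : θ ^ 2 * P ^ 2 * (Rθ * Rθ) * (d - r) * (κ * R2) ≤
          θ ^ 2 * P ^ 2 * (Rθ * Rθ) * (d - r) * (d - r) := by
        apply mul_le_mul_of_nonneg_left hgap
        have : 0 ≤ d - r := by linarith
        positivity
      calc θ ^ 2 * P ^ 2 * κ * (d - r) * (r * r * r)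
          = θ ^ 2 * P ^ 2 * (Rθ * Rθ) * (d - r) * (κ * R2) := by rw [← hRR2]; ring
        _ ≤ θ ^ 2 * P ^ 2 * (Rθ * Rθ) * (d - r) * (d - r) := h5
        _ = (θ * P * Rθ * (d - r)) ^ 2 := by ring
        _ ≤ (G * ((1 + c) * r)) ^ 2 := h3
        _ = G ^ 2 * (1 + c) ^ 2 * r ^ 2 := by ring
    have h6 : θ ^ 2 * P ^ 2 * κ * (d - r) * r ≤ G ^ 2 * (1 + c) ^ 2 := by
      have hr2 : (0:ℝ) < r ^ 2 := by positivity
      nlinarith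
    have h7 : (KB * G) ^ 2 = KB ^ 2 * G ^ 2 := by ring
    rw [h7, hKB2]
    rw [div_mul_eq_mul_div, le_div_iff₀ (by positivity)]
    nlinarith
  have hcsqrt : Real.sqrt (2 * (1 + c) * r * (d - r)) ≤ KB * G := by
    calc Real.sqrt (2 * (1 + c) * r * (d - r)) ≤ Real.sqrt ((KB * G) ^ 2) :=
          Real.sqrt_le_sqrt hcc
      _ = KB * G := Real.sqrt_sq (by positivity)
  -- step a : s ≤ 2 √c R1 + sqrt (2(1+c) r (d-r))
  have hq : d ^ 2 - r ^ 2 ≤ 2 * (1 + c) * r * (d - r) := by nlinarith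
  have hq0 : 0 ≤ d ^ 2 - r ^ 2 := by nlinarith
  have hsa : s ≤ 2 * (Real.sqrt c * R1) + Real.sqrt (2 * (1 + c) * r * (d - r)) := by
    have hp0 : 0 ≤ Real.sqrt c * R1 := by positivity
    have h1 : (s - Real.sqrt c * R1) ^ 2 ≤ (Real.sqrt c * R1) ^ 2 + (d ^ 2 - r ^ 2) := by
      nlinarith
    have h2 : s - Real.sqrt c * R1 ≤
        Real.sqrt ((Real.sqrt c * R1) ^ 2 + (d ^ 2 - r ^ 2)) := by
      calc s - Real.sqrt c * R1 ≤ |s - Real.sqrt c * R1| := le_abs_self _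
        _ = Real.sqrt ((s - Real.sqrt c * R1) ^ 2) := (Real.sqrt_sq_eq_abs _).symm
        _ ≤ _ := Real.sqrt_le_sqrt h1
    have h3 : Real.sqrt ((Real.sqrt c * R1) ^ 2 + (d ^ 2 - r ^ 2)) ≤
        Real.sqrt c * R1 + Real.sqrt (2 * (1 + c) * r * (d - r)) := by
      calc Real.sqrt ((Real.sqrt c * R1) ^ 2 + (d ^ 2 - r ^ 2))
          ≤ Real.sqrt ((Real.sqrt c * R1) ^ 2 + 2 * (1 + c) * r * (d - r)) :=
            Real.sqrt_le_sqrt (by linarith)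
        _ ≤ Real.sqrt ((Real.sqrt c * R1) ^ 2) + Real.sqrt (2 * (1 + c) * r * (d - r)) :=
            sqrt_add_le' (by positivity) hq'0
        _ = _ := by rw [Real.sqrt_sq hp0]
    linarith
  calc s ≤ 2 * (Real.sqrt c * R1) + Real.sqrt (2 * (1 + c) * r * (d - r)) := hsa
    _ ≤ KA * G + KB * G := by linarith
    _ = (KA + KB) * G := by ring


lemma sq_zero' (s : ℝ) (h0 : 0 ≤ s) (h : s ^ 2 ≤ 0) : s = 0 := by nlinarith

lemma gap_helper (γ c d r R1 R2 R3 s : ℝ) (hc : 0 < c) (hγ : 0 < γ) (hcγ : c < γ/2)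
    (hr : 0 < r) (hrd : r ≤ d) (hR2 : 0 < R2) (hcase : d ≤ (1+c)*r)
    (hA : (Real.sqrt c * R1) ^ 2 = c * R3) (hB : R3 = R2 * r)
    (hreg2 : s ^ 2 ≤ 2 * (Real.sqrt c * R1) * s + (d ^ 2 - r ^ 2))
    (hsepn : (d - r) ^ 2 + 2 * γ * R2 * d ≤ s ^ 2) :
    (γ - 2*c) / (2*(1+c)) * R2 ≤ d - r := by
  have hs4 := quad_bound s (Real.sqrt c * R1) (d ^ 2 - r ^ 2) hreg2
  rw [hA, hB] at hs4
  have h4 : R2 * r ≤ R2 * d := mul_le_mul_of_nonneg_left hrd hR2.le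
  have h4' : 2 * γ * (R2 * r) ≤ 2 * γ * (R2 * d) :=
    mul_le_mul_of_nonneg_left h4 (by linarith : (0:ℝ) ≤ 2 * γ)
  have h5 : 2*γ*(R2*r) ≤ 4*c*(R2*r) + 2*(d ^ 2 - r ^ 2) := by nlinarith [hsepn, hs4, h4']
  have hdr0 : 0 ≤ d - r := by linarith
  have hsum : d + r ≤ 2*(1+c)*r := by nlinarith [mul_nonneg hc.le hr.le]
  have h6 : (γ - 2*c) * (R2 * r) ≤ (d - r) * (2*(1+c)) * r := by
    have h7 : (d - r) * (d + r) ≤ (d - r) * (2*(1+c)*r) :=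
      mul_le_mul_of_nonneg_left hsum hdr0
    nlinarith [h5, h7]
  rw [div_mul_eq_mul_div, div_le_iff₀ (by linarith : (0:ℝ) < 2*(1+c))]
  exact le_of_mul_le_mul_right (by nlinarith [h6]) hr

set_option maxHeartbeats 1000000 in
lemma star_helper (θ c d r : ℝ) (hθ0 : 0 < θ) (hθ1 : θ ≤ 1) (hr : 0 < r) (hrd : r ≤ d)
    (hc : 0 < c) (hcase : d ≤ (1+c)*r) :
    θ * ((1+c) ^ θ) * r ^ θ * (d - r) ≤ (d ^ θ - r ^ θ) * ((1+c)*r) := by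
  have hdpos : 0 < d := lt_of_lt_of_le hr hrd
  have hd0 : 0 ≤ d := hdpos.le
  have hr0 : 0 ≤ r := hr.le
  have hrθpos : 0 < r ^ θ := Real.rpow_pos_of_pos hr _
  have hdθpos : 0 < d ^ θ := Real.rpow_pos_of_pos hdpos _
  have hconc : θ * (d ^ θ) * (d - r) ≤ (d ^ θ - r ^ θ) * d := by
    have ht := amgm_rpow (t := r / d) (by positivity) hθ0.le hθ1
    have hrdθ : r ^ θ = (r / d) ^ θ * d ^ θ := by
      rw [← Real.mul_rpow (by positivity) hd0, div_mul_cancel₀ _ (ne_of_gt hdpos)]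
    have h7 : r ^ θ ≤ (1 - θ + θ * (r / d)) * d ^ θ := by
      rw [hrdθ]; exact mul_le_mul_of_nonneg_right ht hdθpos.le
    have h8 : (1 - θ + θ * (r / d)) * d ^ θ * d = d ^ θ * d - θ * d ^ θ * (d - r) := by
      field_simp; ring
    nlinarith [mul_le_mul_of_nonneg_right h7 hd0, h8]
  have hbase : ((1+c) ^ θ) * r ^ θ * d ≤ d ^ θ * ((1 + c) * r) := by
    have hypos : 0 < (1 + c) * r := by positivity
    have htge : 1 ≤ ((1 + c) * r) / d := (one_le_div hdpos).mpr hcase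
    have h9 : (((1 + c) * r) / d) ^ θ ≤ ((1 + c) * r) / d := by
      calc (((1 + c) * r) / d) ^ θ ≤ (((1 + c) * r) / d) ^ (1:ℝ) :=
            Real.rpow_le_rpow_of_exponent_le htge hθ1
        _ = _ := Real.rpow_one _
    have h10 : ((1 + c) * r) ^ θ = (((1 + c) * r) / d) ^ θ * d ^ θ := by
      rw [← Real.mul_rpow (by positivity) hd0, div_mul_cancel₀ _ (ne_of_gt hdpos)]
    have h11 : ((1 + c) * r) ^ θ * d ≤ d ^ θ * ((1 + c) * r) := by
      rw [h10]
      calc (((1 + c) * r) / d) ^ θ * d ^ θ * d ≤ (((1 + c) * r) / d) * d ^ θ * d := by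
            nlinarith [mul_le_mul_of_nonneg_right h9 (by positivity : (0:ℝ) ≤ d ^ θ * d)]
        _ = d ^ θ * ((1 + c) * r) := by field_simp
    have h12 : ((1 + c) * r) ^ θ = ((1+c) ^ θ) * r ^ θ := by
      rw [← Real.mul_rpow (by linarith : (0:ℝ) ≤ 1 + c) hr0]
    rw [← h12]; exact h11
  have hdr0 : 0 ≤ d - r := by linarith
  have h13 : θ * ((1+c) ^ θ) * r ^ θ * (d - r) * d ≤
      θ * (d ^ θ) * (d - r) * ((1 + c) * r) := by
    nlinarith [mul_le_mul_of_nonneg_left hbase (mul_nonneg hθ0.le hdr0)]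
  have h14 : θ * (d ^ θ) * (d - r) * ((1 + c) * r) ≤
      (d ^ θ - r ^ θ) * ((1 + c) * r) * d := by
    nlinarith [hconc, mul_pos (by positivity : (0:ℝ) < 1 + c) hr]
  exact le_of_mul_le_mul_right (by nlinarith) hdpos

set_option maxHeartbeats 1000000 in
lemma case1_helper (θ c d r s : ℝ) (hθ0 : 0 < θ) (hθ1 : θ ≤ 1) (hc : 0 < c)
    (hr0 : 0 ≤ r) (hd1 : d ≤ 1) (hcase : (1+c)*r < d) (hs0 : 0 ≤ s) (htri : s ≤ d + r) :
    s ≤ (2 * ((1+c) ^ θ) / ((1+c) ^ θ - 1)) * (d ^ θ - r ^ θ) := by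
  have hdpos : 0 < d := lt_of_le_of_lt (by positivity) hcase
  have hP1 : 1 < (1+c) ^ θ := by
    rw [Real.one_lt_rpow_iff_of_pos (by linarith)]
    exact Or.inl ⟨by linarith, hθ0⟩
  have hrθ : r ^ θ * ((1+c) ^ θ) ≤ d ^ θ := by
    have h1 : ((1 + c) * r) ^ θ ≤ d ^ θ := Real.rpow_le_rpow (by positivity) hcase.le hθ0.le
    rw [Real.mul_rpow (by linarith : (0:ℝ) ≤ 1 + c) hr0] at h1
    nlinarith
  have hd1θ : d ≤ d ^ θ := by
    calc d = d ^ (1:ℝ) := (Real.rpow_one d).symm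
      _ ≤ d ^ θ := Real.rpow_le_rpow_of_exponent_ge hdpos hd1 hθ1
  have hrθ0 : 0 ≤ r ^ θ := Real.rpow_nonneg hr0 _
  have hrled : r ≤ d := by nlinarith [mul_nonneg hc.le hr0]
  have hs2d : s ≤ 2 * d ^ θ := by linarith
  rw [div_mul_eq_mul_div, le_div_iff₀ (by linarith)]
  calc s * ((1+c) ^ θ - 1) ≤ (2 * d ^ θ) * ((1+c) ^ θ - 1) :=
        mul_le_mul_of_nonneg_right hs2d (by linarith)
    _ = 2 * (1+c) ^ θ * d ^ θ - 2 * d ^ θ := by ring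
    _ ≤ 2 * (1+c) ^ θ * d ^ θ - 2 * (r ^ θ * ((1+c) ^ θ)) := by linarith
    _ = 2 * (1+c) ^ θ * (d ^ θ - r ^ θ) := by ring

set_option maxHeartbeats 1000000 in
lemma key_real (ω γ c : ℝ) (hω0 : 0 ≤ ω) (hω2 : ω < 2) (hγ : 0 < γ) (hc : 0 < c)
    (hcγ : c < γ / 2) :
    ∃ K, 0 < K ∧ ∀ d r s : ℝ, 0 ≤ r → r ≤ d → d ≤ 1 → 0 ≤ s → s ≤ d + r →
      (d - r) ^ 2 + 2 * γ * r ^ (ω + 1) * d ≤ s ^ 2 →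
      (d ≤ (1 + c) * r → s ^ 2 ≤ 2 * (Real.sqrt c * r ^ (ω / 2 + 1)) * s + (d ^ 2 - r ^ 2)) →
      s ≤ K * (d ^ (1 - ω / 2) - r ^ (1 - ω / 2)) := by
  have hθ0 : (0:ℝ) < 1 - ω / 2 := by linarith
  have hθ1 : (1:ℝ) - ω / 2 ≤ 1 := by linarith
  set θ : ℝ := 1 - ω / 2 with hθdef
  have hc1 : (1:ℝ) < 1 + c := by linarith
  set P : ℝ := (1 + c) ^ θ with hPdef
  have hP1 : 1 < P := by
    rw [hPdef, Real.one_lt_rpow_iff_of_pos (by linarith)]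
    exact Or.inl ⟨hc1, hθ0⟩
  have hP0 : (0:ℝ) < P := by linarith
  set κ : ℝ := (γ - 2 * c) / (2 * (1 + c)) with hκdef
  have hκ0 : 0 < κ := div_pos (by linarith) (by linarith)
  set K1 : ℝ := 2 * P / (P - 1) with hK1def
  have hK10 : 0 < K1 := by
    apply div_pos (by linarith) (by linarith)
  set KA : ℝ := 2 * Real.sqrt c * (1 + c) / (θ * P * κ) with hKAdef
  have hKA0 : 0 ≤ KA := by
    apply div_nonneg (by positivity)
    positivity
  set KB : ℝ := Real.sqrt (2 * (1 + c) ^ 3 / (θ ^ 2 * P ^ 2 * κ)) with hKBdef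
  have hKB0 : 0 ≤ KB := Real.sqrt_nonneg _
  refine ⟨max K1 (KA + KB), lt_of_lt_of_le hK10 (le_max_left _ _), ?_⟩
  intro d r s hr0 hrd hd1 hs0 htri hsepn hregn
  have hd0 : 0 ≤ d := hr0.trans hrd
  have hG0 : 0 ≤ d ^ θ - r ^ θ := by
    have := Real.rpow_le_rpow hr0 hrd hθ0.le
    linarith
  rcases le_or_gt d ((1 + c) * r) with hcase | hcase
  · -- case 2 : d ≤ (1+c) r
    rcases eq_or_lt_of_le hr0 with hr | hr
    · -- r = 0 hence d = 0 and s = 0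
      have hr' : r = 0 := hr.symm
      have hd' : d = 0 := le_antisymm (by rw [hr'] at hcase; simpa using hcase) hd0
      have hz : (0:ℝ) ^ (ω / 2 + 1) = 0 := Real.zero_rpow (by positivity)
      have hs2 : s ^ 2 ≤ 0 := by
        have h := hregn hcase
        rw [hr', hd', hz] at h
        simpa using h
      have hs' : s = 0 := sq_zero' s hs0 hs2
      rw [hs', hr', hd']
      simp
    · -- r > 0
      have hdpos : 0 < d := lt_of_lt_of_le hr hrd
      have hrθpos : 0 < r ^ θ := Real.rpow_pos_of_pos hr _
      have hdθpos : 0 < d ^ θ := Real.rpow_pos_of_pos hdpos _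
      have hR1pos : 0 < r ^ (ω / 2 + 1) := Real.rpow_pos_of_pos hr _
      have hR2pos : 0 < r ^ (ω + 1) := Real.rpow_pos_of_pos hr _
      -- rpow identities
      have hRR1 : r ^ θ * r ^ (ω + 1) = r ^ (ω / 2 + 1) * r := by
        rw [← Real.rpow_add hr]
        rw [show θ + (ω + 1) = (ω / 2 + 1) + 1 by rw [hθdef]; ring]
        rw [Real.rpow_add hr, Real.rpow_one]
      have hRR2 : r ^ θ * r ^ θ * r ^ (ω + 1) = r * r * r := by
        rw [← Real.rpow_add hr, ← Real.rpow_add hr]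
        rw [show θ + θ + (ω + 1) = (3:ℝ) by rw [hθdef]; ring]
        rw [show (3:ℝ) = ((3:ℕ):ℝ) by norm_num, Real.rpow_natCast]
        ring
      have hrω2a : r ^ (ω + 2) = r ^ (ω / 2 + 1) * r ^ (ω / 2 + 1) := by
        rw [← Real.rpow_add hr]; congr 1; ring
      have hrω2b : r ^ (ω + 2) = r ^ (ω + 1) * r := by
        rw [← Real.rpow_add_one (ne_of_gt hr) (ω + 1)]
        congr 1; ring
      -- gap inequality
      have hgap : κ * r ^ (ω + 1) ≤ d - r := by
        have h := gap_helper γ c d r (r ^ (ω / 2 + 1)) (r ^ (ω + 1)) (r ^ (ω + 2)) s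
          hc hγ hcγ hr hrd hR2pos hcase
          (by rw [mul_pow, Real.sq_sqrt hc.le, hrω2a]; ring) hrω2b (hregn hcase) hsepn
        rw [← hκdef] at h
        exact h
      have hstar : θ * P * r ^ θ * (d - r) ≤ (d ^ θ - r ^ θ) * ((1 + c) * r) := by
        have h := star_helper θ c d r hθ0 hθ1 hr hrd hc hcase
        rw [← hPdef] at h
        exact h
      have hcore := case2_core θ γ c κ P KA KB d r s (r ^ (ω / 2 + 1)) (r ^ (ω + 1))
        (r ^ θ) (d ^ θ) hθ0 hc hκ0 hP0 hr hrd hs0 hR1pos hR2pos hrθpos hdθpos hcase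
        (hregn hcase) hgap hstar hRR1 hRR2 hKAdef hKBdef
      calc s ≤ (KA + KB) * (d ^ θ - r ^ θ) := hcore
        _ ≤ max K1 (KA + KB) * (d ^ θ - r ^ θ) :=
          mul_le_mul_of_nonneg_right (le_max_right _ _) hG0
  · -- case 1 : (1+c) r < d
    have hfinal : s ≤ K1 * (d ^ θ - r ^ θ) := by
      have h := case1_helper θ c d r s hθ0 hθ1 hc hr0 hd1 hcase hs0 htri
      rw [← hPdef, ← hK1def] at h
      exact h
    calc s ≤ K1 * (d ^ θ - r ^ θ) := hfinal
      _ ≤ max K1 (KA + KB) * (d ^ θ - r ^ θ) :=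
        mul_le_mul_of_nonneg_right (le_max_left _ _) hG0


lemma sep_helper (d r s γ w w1 ip : ℝ) (hexp : s ^ 2 = d ^ 2 - 2 * ip + r ^ 2)
    (hsepi : ip ≤ (1 - γ * w) * d * r) (hw : w * r = w1) :
    (d - r) ^ 2 + 2 * γ * w1 * d ≤ s ^ 2 := by
  have h : (1 - γ * w) * d * r = d * r - γ * (w1 * d) := by rw [← hw]; ring
  nlinarith [hsepi, hexp, h]

lemma reg_helper (d r s sc ip : ℝ) (hexp : d ^ 2 = s ^ 2 - 2 * ip + r ^ 2)
    (hregi : ip ≤ sc * s) : s ^ 2 ≤ 2 * sc * s + (d ^ 2 - r ^ 2) := by linarith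

lemma mono_helper (γ X Y x y : ℝ) (hγ : 0 ≤ γ) (hX0 : 0 ≤ X) (hXY : X ≤ Y)
    (hx0 : 0 ≤ x) (hxy : x ≤ y) : 2 * γ * X * x ≤ 2 * γ * Y * y := by
  have h1 : X * x ≤ Y * y := mul_le_mul hXY hxy hx0 (hX0.trans hXY)
  have h2 := mul_le_mul_of_nonneg_left h1 (by linarith : (0:ℝ) ≤ 2 * γ)
  nlinarith [h2]

set_option maxHeartbeats 1000000 in
theorem stmt14 {n : ℕ} (A B : Set (EuclideanSpace ℝ (Fin n)))
    (hAne : A.Nonempty) (hBne : B.Nonempty) (hAc : IsClosed A) (hBc : IsClosed B)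
    (xs : EuclideanSpace ℝ (Fin n)) (hxs : xs ∈ A ∩ B)
    (ω γ c : ℝ) (hω : 0 ≤ ω) (hω2 : ω < 2) (hγ : 0 < γ) (hc : 0 < c) (hcγ : c < γ / 2)
    (hsep : SeparablyIntersects A B xs ω γ)
    (hreg : HolderRegular A B xs (ω / 2) c) :
    ∃ V ∈ nhds xs, ∀ a b : ℕ → EuclideanSpace ℝ (Fin n),
      (∀ k, b k ∈ projSet B (a k)) → (∀ k, a (k + 1) ∈ projSet A (b k)) →
      (∃ k, a k ∈ V ∨ b k ∈ V) →
      ∃ p ∈ A ∩ B, Filter.Tendsto a Filter.atTop (nhds p) ∧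
        Filter.Tendsto b Filter.atTop (nhds p) := by
  obtain ⟨hxsA, hxsB⟩ := hxs
  obtain ⟨U₁, hU₁, hsepU⟩ := hsep
  obtain ⟨U₂, hU₂, hregU⟩ := hreg
  obtain ⟨ε₀, hε₀, hballU⟩ := Metric.mem_nhds_iff.mp (Filter.inter_mem hU₁ hU₂)
  obtain ⟨K, hK0, hkey⟩ := key_real ω γ c hω hω2 hγ hc hcγ
  have hθ0 : (0:ℝ) < 1 - ω / 2 := by linarith
  set θ : ℝ := 1 - ω / 2 with hθdef
  set t : ℝ := (ε₀ / (2 * K)) ^ θ⁻¹ with htdef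
  have ht0 : 0 < t := Real.rpow_pos_of_pos (by positivity) _
  set δ : ℝ := min (1/2) (min (ε₀/13) (t/2)) with hδdef
  have hδ0 : 0 < δ := by
    apply lt_min (by norm_num)
    exact lt_min (by positivity) (by positivity)
  have hδhalf : δ ≤ 1/2 := min_le_left _ _
  have hδ13 : δ ≤ ε₀/13 := le_trans (min_le_right _ _) (min_le_left _ _)
  have hδt : 2*δ ≤ t := by
    have h1 : δ ≤ min (ε₀/13) (t/2) := min_le_right _ _
    have h2 : min (ε₀/13) (t/2) ≤ t/2 := min_le_right _ _
    linarith
  have hKt : K * (2*δ) ^ θ ≤ ε₀ / 2 := by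
    have h1 : (2*δ) ^ θ ≤ t ^ θ := Real.rpow_le_rpow (by linarith) hδt hθ0.le
    have h2 : t ^ θ = ε₀ / (2 * K) := by
      rw [htdef]
      exact Real.rpow_inv_rpow (by positivity) (ne_of_gt hθ0)
    rw [h2] at h1
    calc K * (2*δ) ^ θ ≤ K * (ε₀ / (2 * K)) := by
          exact mul_le_mul_of_nonneg_left h1 hK0.le
      _ = ε₀ / 2 := by field_simp
  refine ⟨Metric.ball xs δ, Metric.ball_mem_nhds xs hδ0, ?_⟩
  intro a b hb ha hV
  obtain ⟨m, hm⟩ := hV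
  -- distance function to A along the b-sequence
  set D : ℕ → ℝ := fun k => Metric.infDist (b k) A with hDdef
  have hDnn : ∀ k, 0 ≤ D k := fun k => Metric.infDist_nonneg
  have hbm : dist (b m) xs < 2*δ := by
    rcases hm with h | h
    · have h1 : dist (b m) (a m) ≤ dist (a m) xs := by
        rw [dist_comm, dist_eq_norm, (hb m).2]
        exact Metric.infDist_le_dist_of_mem hxsB
      have h2 : dist (a m) xs < δ := h
      calc dist (b m) xs ≤ dist (b m) (a m) + dist (a m) xs := dist_triangle _ _ _
        _ < 2*δ := by linarith
    · have : dist (b m) xs < δ := h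
      linarith
  have hDm : D m < 2*δ := lt_of_le_of_lt (Metric.infDist_le_dist_of_mem hxsA) hbm
  -- the block estimate
  have hblock : ∀ k, dist (b k) xs < 2*δ + ε₀/2 → D k ≤ 2*δ →
      D (k+1) ≤ D k ∧
      dist (b (k+1)) (b k) ≤ K * ((D k) ^ θ - (D (k+1)) ^ θ) ∧
      2*γ*((D (k+1)) ^ (ω+1)) * D k ≤ (dist (b (k+1)) (b k)) ^ 2 := by
    intro k hk1 hk2
    have hbkB : b k ∈ B := (hb k).1
    have ha'A : a (k+1) ∈ A := (ha k).1
    have hb'B : b (k+1) ∈ B := (hb (k+1)).1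
    have hdD : ‖b k - a (k+1)‖ = D k := (ha k).2
    set d : ℝ := D k with hddef
    set r : ℝ := ‖a (k+1) - b (k+1)‖ with hrdef
    have hrinf : r = Metric.infDist (a (k+1)) B := (hb (k+1)).2
    have hr0 : 0 ≤ r := norm_nonneg _
    have hd0 : 0 ≤ d := hDnn k
    -- r ≤ d
    have hrd : r ≤ d := by
      rw [hrinf, ← hdD]
      calc Metric.infDist (a (k+1)) B ≤ dist (a (k+1)) (b k) :=
            Metric.infDist_le_dist_of_mem hbkB
        _ = ‖b k - a (k+1)‖ := by rw [dist_comm, dist_eq_norm]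
    have hd2δ : d ≤ 2*δ := hk2
    -- locations
    have hεδ : 13*δ ≤ ε₀ := by linarith
    have hbkball : b k ∈ Metric.ball xs ε₀ := by
      simp only [Metric.mem_ball]
      calc dist (b k) xs < 2*δ + ε₀/2 := hk1
        _ ≤ ε₀ := by linarith
    have hdista : dist (a (k+1)) (b k) = d := by
      rw [dist_comm, dist_eq_norm, hdD]
    have ha'ball : a (k+1) ∈ Metric.ball xs ε₀ := by
      simp only [Metric.mem_ball]
      calc dist (a (k+1)) xs ≤ dist (a (k+1)) (b k) + dist (b k) xs := dist_triangle _ _ _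
        _ < d + (2*δ + ε₀/2) := by linarith [hk1, le_of_eq hdista]
        _ ≤ ε₀ := by linarith
    have hdistb' : dist (b (k+1)) (a (k+1)) = r := by
      rw [dist_comm, dist_eq_norm]
    have hb'ball : b (k+1) ∈ Metric.ball xs ε₀ := by
      simp only [Metric.mem_ball]
      calc dist (b (k+1)) xs ≤ dist (b (k+1)) (a (k+1)) + dist (a (k+1)) xs :=
            dist_triangle _ _ _
        _ ≤ r + (dist (a (k+1)) (b k) + dist (b k) xs) := by
            linarith [dist_triangle (a (k+1)) (b k) xs, le_of_eq hdistb']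
        _ < 2*δ + (2*δ + (2*δ + ε₀/2)) := by linarith [hk1, le_of_eq hdista]
        _ ≤ ε₀ := by linarith
    -- separability inequality
    have hsepi := hsepU (b k) (a (k+1)) (b (k+1)) hbkB (ha k) (hb (k+1))
      (hballU hbkball).1 (hballU ha'ball).1 (hballU hb'ball).1
    -- abbreviations
    set s : ℝ := ‖b (k+1) - b k‖ with hsdef
    have hs0 : 0 ≤ s := norm_nonneg _
    have hrev1 : ‖b (k+1) - a (k+1)‖ = r := norm_sub_rev _ _
    have hrev2 : ‖b k - b (k+1)‖ = s := norm_sub_rev _ _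
    -- numeric separability
    have hsepn : (d - r) ^ 2 + 2 * γ * r ^ (ω + 1) * d ≤ s ^ 2 := by
      have hexp : ‖(b k - a (k+1)) - (b (k+1) - a (k+1))‖ ^ 2 =
          ‖b k - a (k+1)‖ ^ 2 - 2 * ⟪b k - a (k+1), b (k+1) - a (k+1)⟫ +
            ‖b (k+1) - a (k+1)‖ ^ 2 := norm_sub_sq_real _ _
      have hab : (b k - a (k+1)) - (b (k+1) - a (k+1)) = b k - b (k+1) := by abel
      rw [hab, hrev2, hdD, hrev1] at hexp
      rw [hdD, hrev1] at hsepi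
      -- hsepi : ⟪..⟫ ≤ (1 - γ * r ^ ω) * d * r
      have hrωr : r ^ ω * r = r ^ (ω + 1) := by
        rcases eq_or_lt_of_le hr0 with h | h
        · rw [← h]
          rw [Real.zero_rpow (by positivity : (ω:ℝ) + 1 ≠ 0)]
          ring
        · rw [Real.rpow_add_one (ne_of_gt h)]
      exact sep_helper d r s γ (r ^ ω) (r ^ (ω+1)) _ hexp hsepi hrωr
    -- triangle
    have htri : s ≤ d + r := by
      have he : b (k+1) - b k = (b (k+1) - a (k+1)) + (a (k+1) - b k) := by abel
      have h1 : s ≤ r + d := by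
        rw [hsdef, he]
        calc ‖(b (k+1) - a (k+1)) + (a (k+1) - b k)‖
            ≤ ‖b (k+1) - a (k+1)‖ + ‖a (k+1) - b k‖ := norm_add_le _ _
          _ = r + d := by rw [hrev1, norm_sub_rev (a (k+1)) (b k), hdD]
      linarith
    -- numeric regularity (conditional)
    have hregn : d ≤ (1 + c) * r →
        s ^ 2 ≤ 2 * (Real.sqrt c * r ^ (ω / 2 + 1)) * s + (d ^ 2 - r ^ 2) := by
      intro hcase
      have hregi := hregU (a (k+1)) ⟨ha'A, (hballU ha'ball).2⟩ (b (k+1))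
        ⟨hb (k+1), (hballU hb'ball).2⟩ (b k) hbkB
        (by rw [hdD, ← hrdef]; exact hcase) (ha k)
      -- hregi : ⟪a' - b', b k - b'⟫ ≤ √c * r ^ (ω/2 + 1) * ‖b k - b'‖
      rw [hrev2] at hregi
      have hexp : ‖(b k - b (k+1)) - (a (k+1) - b (k+1))‖ ^ 2 =
          ‖b k - b (k+1)‖ ^ 2 - 2 * ⟪b k - b (k+1), a (k+1) - b (k+1)⟫ +
            ‖a (k+1) - b (k+1)‖ ^ 2 := norm_sub_sq_real _ _
      have hab : (b k - b (k+1)) - (a (k+1) - b (k+1)) = b k - a (k+1) := by abel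
      rw [hab, hdD, hrev2] at hexp
      have hcomm : ⟪b k - b (k+1), a (k+1) - b (k+1)⟫ =
          ⟪a (k+1) - b (k+1), b k - b (k+1)⟫ := real_inner_comm _ _
      rw [hcomm] at hexp
      rw [← hrdef] at hexp hregi
      exact reg_helper d r s (Real.sqrt c * r ^ (ω / 2 + 1)) _ hexp hregi
    -- apply the key estimate
    have hest := hkey d r s hr0 hrd (by linarith) hs0 htri hsepn hregn
    -- D (k+1) ≤ r
    have hDk1r : D (k+1) ≤ r := by
      calc D (k+1) ≤ dist (b (k+1)) (a (k+1)) := Metric.infDist_le_dist_of_mem ha'A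
        _ = r := hdistb'
    have hDk10 : 0 ≤ D (k+1) := hDnn _
    have hmono1 : (D (k+1)) ^ θ ≤ r ^ θ := Real.rpow_le_rpow hDk10 hDk1r hθ0.le
    have hmono2 : (D (k+1)) ^ (ω+1) ≤ r ^ (ω+1) := Real.rpow_le_rpow hDk10 hDk1r (by linarith)
    have hdistbb : dist (b (k+1)) (b k) = s := dist_eq_norm _ _
    refine ⟨le_trans hDk1r hrd, ?_, ?_⟩
    · rw [hdistbb]
      calc s ≤ K * (d ^ θ - r ^ θ) := hest
        _ ≤ K * ((D k) ^ θ - (D (k+1)) ^ θ) := by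
          apply mul_le_mul_of_nonneg_left _ hK0.le
          rw [← hddef]
          linarith
    · rw [hdistbb]
      have h1 : 2*γ*((D (k+1)) ^ (ω+1)) * D k ≤ 2*γ*(r ^ (ω+1)) * d :=
        mono_helper γ _ _ _ _ hγ.le (Real.rpow_nonneg hDk10 (ω+1)) hmono2 (hDnn k)
          (le_of_eq hddef.symm)
      linarith [hsepn, sq_nonneg (d - r), h1]
  -- the invariant by induction
  have hinv : ∀ j : ℕ, dist (b (m+j)) (b m) ≤ K * ((D m) ^ θ - (D (m+j)) ^ θ) ∧
      D (m+j) ≤ D m := by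
    intro j
    induction j with
    | zero => simp
    | succ j ih =>
      have hDmθ : (D m) ^ θ ≤ (2*δ) ^ θ :=
        Real.rpow_le_rpow (hDnn m) hDm.le hθ0.le
      have hDjθ0 : 0 ≤ (D (m+j)) ^ θ := Real.rpow_nonneg (hDnn _) _
      have hpre1 : dist (b (m+j)) xs < 2*δ + ε₀/2 := by
        calc dist (b (m+j)) xs ≤ dist (b (m+j)) (b m) + dist (b m) xs := dist_triangle _ _ _
          _ ≤ K * ((D m) ^ θ - (D (m+j)) ^ θ) + dist (b m) xs := by linarith [ih.1]
          _ ≤ K * (2*δ) ^ θ + dist (b m) xs := by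
              have : K * ((D m) ^ θ - (D (m+j)) ^ θ) ≤ K * (2*δ) ^ θ := by
                apply mul_le_mul_of_nonneg_left _ hK0.le
                linarith
              linarith
          _ < ε₀/2 + 2*δ := by linarith [hKt, hbm]
          _ = 2*δ + ε₀/2 := by ring
      have hpre2 : D (m+j) ≤ 2*δ := le_trans ih.2 hDm.le
      obtain ⟨h1, h2, _⟩ := hblock (m+j) hpre1 hpre2
      constructor
      · have hstep : dist (b (m+(j+1))) (b (m+j)) ≤
            K * ((D (m+j)) ^ θ - (D (m+(j+1))) ^ θ) := by
          have : m + (j+1) = (m+j) + 1 := by omega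
          rw [this]
          exact h2
        calc dist (b (m+(j+1))) (b m) ≤
            dist (b (m+(j+1))) (b (m+j)) + dist (b (m+j)) (b m) := dist_triangle _ _ _
          _ ≤ K * ((D (m+j)) ^ θ - (D (m+(j+1))) ^ θ) +
              K * ((D m) ^ θ - (D (m+j)) ^ θ) := by linarith [ih.1]
          _ = K * ((D m) ^ θ - (D (m+(j+1))) ^ θ) := by ring
      · have : m + (j+1) = (m+j) + 1 := by omega
        rw [this]
        exact le_trans h1 ih.2
  -- per-step facts
  have hstepfact : ∀ j : ℕ,
      dist (b (m+(j+1))) (b (m+j)) ≤ K * ((D (m+j)) ^ θ - (D (m+(j+1))) ^ θ) ∧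
      D (m+(j+1)) ≤ D (m+j) ∧
      2*γ*((D (m+(j+1))) ^ (ω+1)) * D (m+j) ≤ (dist (b (m+(j+1))) (b (m+j))) ^ 2 := by
    intro j
    have hDmθ : (D m) ^ θ ≤ (2*δ) ^ θ := Real.rpow_le_rpow (hDnn m) hDm.le hθ0.le
    have hDjθ0 : 0 ≤ (D (m+j)) ^ θ := Real.rpow_nonneg (hDnn _) _
    have hpre1 : dist (b (m+j)) xs < 2*δ + ε₀/2 := by
      calc dist (b (m+j)) xs ≤ dist (b (m+j)) (b m) + dist (b m) xs := dist_triangle _ _ _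
        _ ≤ K * ((D m) ^ θ - (D (m+j)) ^ θ) + dist (b m) xs := by linarith [(hinv j).1]
        _ ≤ K * (2*δ) ^ θ + dist (b m) xs := by
            have : K * ((D m) ^ θ - (D (m+j)) ^ θ) ≤ K * (2*δ) ^ θ := by
              apply mul_le_mul_of_nonneg_left _ hK0.le
              linarith
            linarith
        _ < ε₀/2 + 2*δ := by linarith [hKt, hbm]
        _ = 2*δ + ε₀/2 := by ring
    have hpre2 : D (m+j) ≤ 2*δ := le_trans (hinv j).2 hDm.le
    obtain ⟨h1, h2, h3⟩ := hblock (m+j) hpre1 hpre2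
    have hmj : m + (j+1) = (m+j) + 1 := by omega
    rw [hmj]
    exact ⟨h2, h1, h3⟩
  -- chain estimate
  have hchain : ∀ i j : ℕ, i ≤ j →
      dist (b (m+j)) (b (m+i)) ≤ K * ((D (m+i)) ^ θ - (D (m+j)) ^ θ) := by
    intro i j hij
    induction j, hij using Nat.le_induction with
    | base => simp
    | succ j hij ih =>
      calc dist (b (m+(j+1))) (b (m+i)) ≤
          dist (b (m+(j+1))) (b (m+j)) + dist (b (m+j)) (b (m+i)) := dist_triangle _ _ _
        _ ≤ K * ((D (m+j)) ^ θ - (D (m+(j+1))) ^ θ) +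
            K * ((D (m+i)) ^ θ - (D (m+j)) ^ θ) := by linarith [(hstepfact j).1, ih]
        _ = K * ((D (m+i)) ^ θ - (D (m+(j+1))) ^ θ) := by ring
  -- the limit of D (m + ·)
  have hanti : Antitone (fun j => D (m+j)) :=
    antitone_nat_of_succ_le fun j => (hstepfact j).2.1
  have hbdd : BddBelow (Set.range (fun j => D (m+j))) := by
    refine ⟨0, ?_⟩
    rintro x ⟨j, rfl⟩
    exact hDnn _
  set L : ℝ := ⨅ j, D (m+j) with hLdef
  have htendL : Filter.Tendsto (fun j => D (m+j)) Filter.atTop (nhds L) :=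
    tendsto_atTop_ciInf hanti hbdd
  have hL0 : 0 ≤ L := le_ciInf fun j => hDnn _
  have hLle : ∀ j, L ≤ D (m+j) := fun j => ciInf_le hbdd j
  -- Cauchy
  have htendLθ : Filter.Tendsto (fun j => (D (m+j)) ^ θ) Filter.atTop (nhds (L ^ θ)) :=
    htendL.rpow_const (Or.inr hθ0.le)
  have hcs : CauchySeq (fun j => b (m+j)) := by
    apply cauchySeq_of_le_tendsto_0 (fun N => K * ((D (m+N)) ^ θ - L ^ θ))
    · intro i j N hi hj
      have key : ∀ i' j' : ℕ, N ≤ i' → i' ≤ j' →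
          dist (b (m+j')) (b (m+i')) ≤ K * ((D (m+N)) ^ θ - L ^ θ) := by
        intro i' j' hNi hij
        calc dist (b (m+j')) (b (m+i')) ≤ K * ((D (m+i')) ^ θ - (D (m+j')) ^ θ) :=
              hchain i' j' hij
          _ ≤ K * ((D (m+N)) ^ θ - L ^ θ) := by
            apply mul_le_mul_of_nonneg_left _ hK0.le
            have hh1 : (D (m+i')) ^ θ ≤ (D (m+N)) ^ θ :=
              Real.rpow_le_rpow (hDnn _) (hanti hNi) hθ0.le
            have hh2 : L ^ θ ≤ (D (m+j')) ^ θ :=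
              Real.rpow_le_rpow hL0 (hLle j') hθ0.le
            linarith
      rcases le_total i j with h | h
      · rw [dist_comm]
        exact key i j hi h
      · exact key j i hj h
    · have h := (htendLθ.sub_const (L ^ θ)).const_mul K
      simpa using h
  obtain ⟨p, hp⟩ := cauchySeq_tendsto_of_complete hcs
  have hpB : p ∈ B := hBc.mem_of_tendsto hp
    (Filter.Eventually.of_forall fun j => (hb (m+j)).1)
  -- L = 0
  have hL : L = 0 := by
    by_contra hLne
    have hLpos : 0 < L := lt_of_le_of_ne hL0 (Ne.symm hLne)
    have hbound : 0 < 2*γ*(L ^ (ω+1)) * L := by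
      have := Real.rpow_pos_of_pos hLpos (ω+1)
      positivity
    have hlow : ∀ j, 2*γ*(L ^ (ω+1)) * L ≤ (dist (b (m+(j+1))) (b (m+j))) ^ 2 := by
      intro j
      have h1 : L ^ (ω+1) ≤ (D (m+(j+1))) ^ (ω+1) :=
        Real.rpow_le_rpow hL0 (hLle (j+1)) (by linarith)
      have h2 := (hstepfact j).2.2
      have h3 : 2*γ*(L ^ (ω+1)) * L ≤ 2*γ*((D (m+(j+1))) ^ (ω+1)) * D (m+j) :=
        mono_helper γ _ _ _ _ hγ.le (Real.rpow_nonneg hL0 _) h1 hL0 (hLle j)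
      linarith
    have hshift : Filter.Tendsto (fun j => b (m+(j+1))) Filter.atTop (nhds p) :=
      hp.comp (Filter.tendsto_add_atTop_nat 1)
    have hdist0 : Filter.Tendsto (fun j => dist (b (m+(j+1))) (b (m+j)))
        Filter.atTop (nhds 0) := by
      have := hshift.dist hp
      simpa using this
    have hsq0 : Filter.Tendsto (fun j => (dist (b (m+(j+1))) (b (m+j))) ^ 2)
        Filter.atTop (nhds 0) := by
      have := hdist0.mul hdist0
      simpa [sq] using this
    have hev := hsq0.eventually_lt_const hbound
    obtain ⟨j, hj⟩ := hev.exists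
    linarith [hlow j]
  -- p ∈ A
  have hDto : Filter.Tendsto (fun j => D (m+j)) Filter.atTop (nhds 0) := hL ▸ htendL
  have hpA : p ∈ A := by
    have h2 : Filter.Tendsto (fun j => Metric.infDist (b (m+j)) A)
        Filter.atTop (nhds (Metric.infDist p A)) :=
      ((Metric.continuous_infDist_pt A).tendsto p).comp hp
    have h3 : Metric.infDist p A = 0 := tendsto_nhds_unique h2 hDto
    exact (hAc.mem_iff_infDist_zero hAne).mpr h3
  -- convergence of b
  have htb : Filter.Tendsto b Filter.atTop (nhds p) := by
    rw [← Filter.tendsto_add_atTop_iff_nat m]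
    simpa [Nat.add_comm] using hp
  -- convergence of a
  have hdistab : ∀ j : ℕ, dist (a (m+j+1)) (b (m+j)) = D (m+j) := by
    intro j
    rw [dist_comm, dist_eq_norm]
    exact (ha (m+j)).2
  have hta' : Filter.Tendsto (fun j => a (m+j+1)) Filter.atTop (nhds p) := by
    rw [tendsto_iff_dist_tendsto_zero]
    apply squeeze_zero (fun j => dist_nonneg)
      (g := fun j => D (m+j) + dist (b (m+j)) p)
    · intro j
      calc dist (a (m+j+1)) p ≤ dist (a (m+j+1)) (b (m+j)) + dist (b (m+j)) p :=
            dist_triangle _ _ _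
        _ = D (m+j) + dist (b (m+j)) p := by rw [hdistab j]
    · have h1 : Filter.Tendsto (fun j => dist (b (m+j)) p) Filter.atTop (nhds 0) :=
        tendsto_iff_dist_tendsto_zero.mp hp
      have := hDto.add h1
      simpa using this
  have hta : Filter.Tendsto a Filter.atTop (nhds p) := by
    rw [← Filter.tendsto_add_atTop_iff_nat (m+1)]
    have : (fun j => a (j + (m+1))) = (fun j => a (m+j+1)) := by
      funext j
      rw [show j + (m+1) = m + j + 1 by omega]
    rw [this]
    exact hta'
  exact ⟨p, ⟨hpA, hpB⟩, hta, htb⟩
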